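/- Suppose U = {u} is a singleton with covariances b_{p,q} := b_{p,q}(u) ≥ 0, let B = (b_{p,q}) be the corresponding r×r real matrix, and let ζ = Σ_{p,q ∈ [r]} ζ_{p,q}(u). For an r×r complex matrix A, let 𝒟(A) denote the diagonal matrix whose (q,q) entry is Σ_{p=1}^r A_{p,q}. For m ≥ 0 and ε = (ε₁,…,ε_{2m}) ∈ {1,*}^{2m}, let C_m(ε) denote the diagonal r×r complex matrix whose (q,q) entry is Ψ_q(ζ^{ε₁}⋯ζ^{ε_{2m}}), with C₀ = I. Then: (i) Ψ_q(ζ^{ε₁}⋯ζ^{ε_k}) = 0 for every odd k, every q ∈ [r] and all ε_j ∈ {1,*}; (ii) for every m ≥ 1 and all ε₁,…,ε_{2m} ∈ {1,*}: C_m(ε₁,…,ε_{2m}) = Σ_{j=0}^{m−1} [ε₁ ≠ ε_{2j+2}] · 𝒟( C_j(ε₂,…,ε_{2j+1}) · B · C_{m−1−j}(ε_{2j+3},…,ε_{2m}) ), where [·] equals 1 if the condition holds and 0 otherwise. -/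

import Mathlib

noncomputable section

/-- A letter of a word in the matricially free Fock space of tracial type. -/
abbrev MLetter (r : ℕ) (L : Type*) := (Fin r × Fin r) × L

/-- A finite nonempty chained word with letters in `J × L`. -/
structure MWord (r : ℕ) (J : Set (Fin r × Fin r)) (L : Type*) where
  head : MLetter r L
  tail : List (MLetter r L)
  headJ : head.1 ∈ J
  tailJ : ∀ x ∈ tail, x.1 ∈ J
  chain : List.Chain' (fun a b : MLetter r L => a.1.2 = b.1.1) (head :: tail)

/-- Canonical orthonormal basis index set: vacua `Ω₁,…,Ω_r` and the words. -/
abbrev MBasis (r : ℕ) (J : Set (Fin r × Fin r)) (L : Type*) := (Fin r) ⊕ (MWord r J L)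

/-- The matricially free Fock space of tracial type, `ℓ²` of the basis set. -/
abbrev MSpace (r : ℕ) (J : Set (Fin r × Fin r)) (L : Type*) :=
  lp (fun _ : MBasis r J L => ℂ) 2

/-- Canonical basis vector. -/
def mvec {r : ℕ} {J : Set (Fin r × Fin r)} {L : Type*} (i : MBasis r J L) : MSpace r J L := by
  classical exact lp.single 2 i 1

/-- The vacuum vector `Ω_q`. -/
def vac {r : ℕ} {J : Set (Fin r × Fin r)} {L : Type*} (q : Fin r) : MSpace r J L :=
  mvec (Sum.inl q)

/-- Basis vector of a word. -/
def wvec {r : ℕ} {J : Set (Fin r × Fin r)} {L : Type*} (w : MWord r J L) : MSpace r J L :=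
  mvec (Sum.inr w)

/-- The single-letter word. -/
def MWord.single {r : ℕ} {J : Set (Fin r × Fin r)} {L : Type*}
    (x : MLetter r L) (hx : x.1 ∈ J) : MWord r J L :=
  ⟨x, [], hx, (by intro y hy; cases hy), List.isChain_singleton _⟩

/-- Prepending a letter to a word. -/
def MWord.cons {r : ℕ} {J : Set (Fin r × Fin r)} {L : Type*}
    (x : MLetter r L) (hx : x.1 ∈ J) (w : MWord r J L)
    (hc : x.1.2 = w.head.1.1) : MWord r J L :=
  ⟨x, w.head :: w.tail, hx, by
      intro y hy
      rcases List.mem_cons.mp hy with h | h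
      · exact h ▸ w.headJ
      · exact w.tailJ y h,
    List.isChain_cons_cons.mpr ⟨hc, w.chain⟩⟩

/-- `T` is the matricially free creation operator `℘_{p,q}(l)` with covariance `b`:
it maps `Ω_q` to `√b·((p,q,l))`, each word starting with first index `q` to `√b` times the
word with `((p,q),l)` prepended, and all other canonical basis vectors to `0`. -/
def IsMFCreation {r : ℕ} {J : Set (Fin r × Fin r)} {L : Type*}
    (b : ℝ) (p q : Fin r) (l : L) (hpq : ((p, q) : Fin r × Fin r) ∈ J)
    (T : MSpace r J L →L[ℂ] MSpace r J L) : Prop :=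
  T (vac q) = (Real.sqrt b : ℂ) • wvec (MWord.single ((p, q), l) hpq) ∧
  (∀ q' : Fin r, q' ≠ q → T (vac q') = 0) ∧
  (∀ (w : MWord r J L) (h : w.head.1.1 = q),
      T (wvec w) = (Real.sqrt b : ℂ) • wvec (MWord.cons ((p, q), l) hpq w h.symm)) ∧
  (∀ w : MWord r J L, w.head.1.1 ≠ q → T (wvec w) = 0)

/-- The vector state `Ψ_q(a) = ⟨aΩ_q, Ω_q⟩`. -/
def PsiM {r : ℕ} {J : Set (Fin r × Fin r)} {L : Type*} (q : Fin r)
    (a : MSpace r J L →L[ℂ] MSpace r J L) : ℂ :=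
  @inner ℂ _ _ (vac q : MSpace r J L) (a (vac q))

end
/-- `x^ε` for `ε ∈ {1, *}`: `x^1 = x` (encoded `true`) and `x^* = adjoint x` (encoded `false`). -/
noncomputable def sOp {H : Type*} [NormedAddCommGroup H] [InnerProductSpace ℂ H]
    [CompleteSpace H] (ε : Bool) (x : H →L[ℂ] H) : H →L[ℂ] H :=
  if ε then x else ContinuousLinearMap.adjoint x

set_option synthInstance.maxHeartbeats 400000
set_option maxHeartbeats 1000000

noncomputable section

/-- The sum `ζ = Σ_{p,q} ζ_{p,q}` of the matricial `R`-circular operators. -/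
def zetaSum {r : ℕ}
    (C : (p q : Fin r) → (Unit ⊕ Unit) →
      (MSpace r Set.univ (Unit ⊕ Unit) →L[ℂ] MSpace r Set.univ (Unit ⊕ Unit))) :
    MSpace r Set.univ (Unit ⊕ Unit) →L[ℂ] MSpace r Set.univ (Unit ⊕ Unit) :=
  ∑ pq : Fin r × Fin r,
    (C pq.1 pq.2 (Sum.inl ()) + ContinuousLinearMap.adjoint (C pq.2 pq.1 (Sum.inr ())))

/-- The diagonal matrix of moments `C_m(ε)` with `(q,q)` entry `Ψ_q(ζ^{ε₁}⋯ζ^{ε_k})`. -/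
def momentMat {r : ℕ}
    (C : (p q : Fin r) → (Unit ⊕ Unit) →
      (MSpace r Set.univ (Unit ⊕ Unit) →L[ℂ] MSpace r Set.univ (Unit ⊕ Unit)))
    (k : ℕ) (ε : Fin k → Bool) : Matrix (Fin r) (Fin r) ℂ :=
  Matrix.diagonal (fun q => PsiM q (List.ofFn (fun j => sOp (ε j) (zetaSum C))).prod)

/-- The map `𝒟`: `𝒟(A)` is the diagonal matrix with `(q,q)` entry `Σ_p A_{p,q}`. -/
def Dmap {r : ℕ} (A : Matrix (Fin r) (Fin r) ℂ) : Matrix (Fin r) (Fin r) ℂ :=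
  Matrix.diagonal (fun q => ∑ p, A p q)

end


namespace MomAux

attribute [local instance] Classical.propDecidable

abbrev Lab := Unit ⊕ Unit

variable {r : ℕ}

abbrev W (r : ℕ) := MWord r (Set.univ : Set (Fin r × Fin r)) Lab
abbrev I (r : ℕ) := MBasis r (Set.univ : Set (Fin r × Fin r)) Lab

def lamb (ε : Bool) : Lab := if ε then Sum.inl () else Sum.inr ()
def annl (ε : Bool) : Lab := if ε then Sum.inr () else Sum.inl ()

lemma lamb_not (ε : Bool) : lamb (!ε) = annl ε := by cases ε <;> rfl
lemma annl_not (ε : Bool) : annl (!ε) = lamb ε := by cases ε <;> rfl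
lemma lamb_eq_annl_iff (a c : Bool) : lamb a = annl c ↔ a ≠ c := by
  cases a <;> cases c <;> simp [lamb, annl]

lemma W.ext {w₁ w₂ : W r} (h1 : w₁.head = w₂.head) (h2 : w₁.tail = w₂.tail) : w₁ = w₂ := by
  obtain ⟨a₁, t₁, _, _, _⟩ := w₁
  obtain ⟨a₂, t₂, _, _, _⟩ := w₂
  dsimp at h1 h2
  subst h1; subst h2; rfl

def sing (x : MLetter r Lab) : W r :=
  ⟨x, [], Set.mem_univ _, (by intro y hy; cases hy), List.isChain_singleton _⟩

def cns (x : MLetter r Lab) (w : W r) (hc : x.1.2 = w.head.1.1) : W r :=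
  ⟨x, w.head :: w.tail, Set.mem_univ _, fun y _ => Set.mem_univ _,
    List.isChain_cons_cons.mpr ⟨hc, w.chain⟩⟩

@[simp] lemma sing_head (x : MLetter r Lab) : (sing x).head = x := rfl
@[simp] lemma sing_tail (x : MLetter r Lab) : (sing x).tail = [] := rfl
@[simp] lemma cns_head (x : MLetter r Lab) (w : W r) (hc) : (cns x w hc).head = x := rfl
@[simp] lemma cns_tail (x : MLetter r Lab) (w : W r) (hc) :
    (cns x w hc).tail = w.head :: w.tail := rfl

def popI : W r → I r
  | ⟨hd, [], _, _, _⟩ => Sum.inl hd.1.2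
  | ⟨_, z :: t, _, _, hc⟩ =>
      Sum.inr ⟨z, t, Set.mem_univ _, fun y _ => Set.mem_univ _, hc.tail⟩

lemma popI_nil (y : W r) (h : y.tail = []) : popI y = Sum.inl y.head.1.2 := by
  obtain ⟨hd, t, _, _, _⟩ := y; dsimp at h; subst h; rfl

lemma popI_cons (y : W r) {z : MLetter r Lab} {t : List (MLetter r Lab)}
    (h : y.tail = z :: t) :
    ∃ (hc : List.Chain' (fun a c : MLetter r Lab => a.1.2 = c.1.1) (z :: t)),
      popI y = Sum.inr ⟨z, t, Set.mem_univ _, fun y _ => Set.mem_univ _, hc⟩ := by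
  obtain ⟨hd, t', _, _, hch⟩ := y; dsimp at h; subst h
  exact ⟨hch.tail, rfl⟩

def len : I r → ℕ
  | Sum.inl _ => 0
  | Sum.inr w => w.tail.length + 1

def lastLetter : MLetter r Lab → List (MLetter r Lab) → MLetter r Lab
  | x, [] => x
  | _, z :: t => lastLetter z t

def lastL (w : W r) : MLetter r Lab := lastLetter w.head w.tail

def col : I r → Fin r
  | Sum.inl q => q
  | Sum.inr w => (lastL w).1.2

lemma lastL_nil (y : W r) (h : y.tail = []) : lastL y = y.head := by
  obtain ⟨hd, t, _, _, _⟩ := y; dsimp at h; subst h; rfl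

lemma lastL_mk_cons (hd z : MLetter r Lab) (t : List (MLetter r Lab)) (a1 a2 a3 b1 b2 b3) :
    lastL (⟨hd, z :: t, a1, a2, a3⟩ : W r) = lastL (⟨z, t, b1, b2, b3⟩ : W r) := rfl

lemma lastL_cns (x : MLetter r Lab) (w : W r) (hc) : lastL (cns x w hc) = lastL w := rfl

lemma chain_head (y : W r) {z : MLetter r Lab} {t : List (MLetter r Lab)}
    (h : y.tail = z :: t) : y.head.1.2 = z.1.1 := by
  have := y.chain
  rw [h] at this
  exact (List.isChain_cons_cons.mp this).1

end MomAux
namespace MomAux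

noncomputable section

variable {r : ℕ} (b : Fin r → Fin r → ℝ)

def sq (p q : Fin r) : ℂ := ((Real.sqrt (b p q) : ℝ) : ℂ)

/-- The coefficient-level action of `ζ^ε`. -/
def st (ε : Bool) (v : I r → ℂ) : I r → ℂ
  | Sum.inl t => ∑ p, sq b p t * v (Sum.inr (sing ((p, t), annl ε)))
  | Sum.inr y => (if y.head.2 = lamb ε then sq b y.head.1.1 y.head.1.2 * v (popI y) else 0)
      + ∑ p, sq b p y.head.1.1 * v (Sum.inr (cns ((p, y.head.1.1), annl ε) y rfl))

lemma st_inl (ε : Bool) (v : I r → ℂ) (t : Fin r) :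
    st b ε v (Sum.inl t) = ∑ p, sq b p t * v (Sum.inr (sing ((p, t), annl ε))) := rfl

lemma st_inr (ε : Bool) (v : I r → ℂ) (y : W r) :
    st b ε v (Sum.inr y) =
      (if y.head.2 = lamb ε then sq b y.head.1.1 y.head.1.2 * v (popI y) else 0)
      + ∑ p, sq b p y.head.1.1 * v (Sum.inr (cns ((p, y.head.1.1), annl ε) y rfl)) := rfl

lemma st_add (ε : Bool) (v w : I r → ℂ) : st b ε (v + w) = st b ε v + st b ε w := by
  funext j
  cases j with
  | inl t => simp [st_inl, mul_add, Finset.sum_add_distrib]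
  | inr y =>
    simp only [st_inr, Pi.add_apply, mul_add, Finset.sum_add_distrib]
    split_ifs <;> ring

lemma st_smul (ε : Bool) (c : ℂ) (v : I r → ℂ) : st b ε (c • v) = c • st b ε v := by
  funext j
  cases j with
  | inl t =>
    simp only [st_inl, Pi.smul_apply, smul_eq_mul, Finset.mul_sum]
    exact Finset.sum_congr rfl fun p _ => by ring
  | inr y =>
    simp only [st_inr, Pi.smul_apply, smul_eq_mul, mul_add, Finset.mul_sum]
    congr 1
    · split_ifs <;> ring
    · exact Finset.sum_congr rfl fun p _ => by ring

/-- Bundled linear version of `st`. -/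
def stL (ε : Bool) : (I r → ℂ) →ₗ[ℂ] (I r → ℂ) where
  toFun := st b ε
  map_add' := st_add b ε
  map_smul' := st_smul b ε

@[simp] lemma stL_apply (ε : Bool) (v : I r → ℂ) : stL b ε v = st b ε v := rfl

lemma st_sum {α : Type*} (ε : Bool) (s : Finset α) (f : α → (I r → ℂ)) :
    st b ε (∑ a ∈ s, f a) = ∑ a ∈ s, st b ε (f a) := by
  exact map_sum (stL b ε) f s

def Qf : (I r → ℂ) →ₗ[ℂ] (I r → ℂ) where
  toFun v := fun j => match j with | Sum.inl _ => 0 | Sum.inr y => v (Sum.inr y)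
  map_add' v w := by funext j; cases j <;> simp
  map_smul' c v := by funext j; cases j <;> simp

def Pf : (I r → ℂ) →ₗ[ℂ] (I r → ℂ) where
  toFun v := fun j => match j with | Sum.inl t => v (Sum.inl t) | Sum.inr _ => 0
  map_add' v w := by funext j; cases j <;> simp
  map_smul' c v := by funext j; cases j <;> simp

@[simp] lemma Qf_inl (v : I r → ℂ) (t : Fin r) : Qf v (Sum.inl t) = 0 := rfl
@[simp] lemma Qf_inr (v : I r → ℂ) (y : W r) : Qf v (Sum.inr y) = v (Sum.inr y) := rfl
@[simp] lemma Pf_inl (v : I r → ℂ) (t : Fin r) : Pf v (Sum.inl t) = v (Sum.inl t) := rfl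
@[simp] lemma Pf_inr (v : I r → ℂ) (y : W r) : Pf v (Sum.inr y) = 0 := rfl

lemma Pf_add_Qf (v : I r → ℂ) : Pf v + Qf v = v := by
  funext j; cases j <;> simp

def run : List Bool → (I r → ℂ) → (I r → ℂ)
  | [], v => v
  | ε :: L, v => st b ε (run L v)

def runQ : List Bool → (I r → ℂ) → (I r → ℂ)
  | [], v => Qf v
  | ε :: L, v => Qf (st b ε (runQ L v))

@[simp] lemma run_nil (v : I r → ℂ) : run b [] v = v := rfl
lemma run_cons (ε : Bool) (L : List Bool) (v : I r → ℂ) :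
    run b (ε :: L) v = st b ε (run b L v) := rfl
@[simp] lemma runQ_nil (v : I r → ℂ) : runQ b [] v = Qf v := rfl
lemma runQ_cons (ε : Bool) (L : List Bool) (v : I r → ℂ) :
    runQ b (ε :: L) v = Qf (st b ε (runQ b L v)) := rfl

lemma runQ_smul (L : List Bool) (c : ℂ) (v : I r → ℂ) :
    runQ b L (c • v) = c • runQ b L v := by
  induction L with
  | nil => simp [map_smul]
  | cons ε L ih => rw [runQ_cons, runQ_cons, ih, st_smul, map_smul]

lemma runQ_zero (L : List Bool) : runQ b L (0 : I r → ℂ) = 0 := by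
  simpa using runQ_smul b L 0 0

lemma runQ_sum {α : Type*} (L : List Bool) (s : Finset α) (f : α → (I r → ℂ)) :
    runQ b L (∑ a ∈ s, f a) = ∑ a ∈ s, runQ b L (f a) := by
  induction L with
  | nil => simp [map_sum]
  | cons ε L ih => rw [runQ_cons, ih, st_sum, map_sum]; rfl

attribute [local instance] Classical.propDecidable

def dl (i : I r) : I r → ℂ := fun j => if j = i then 1 else 0

def Mnt (q : Fin r) (L : List Bool) : ℂ := run b L (dl (Sum.inl q)) (Sum.inl q)

/-- First-return (last visit to vacuum) decomposition. -/
lemma FR : ∀ (L : List Bool) (v : I r → ℂ),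
    Qf (run b L v) = runQ b L v +
      ∑ k ∈ Finset.range L.length,
        runQ b (L.take k) (st b (L.getD k false) (Pf (run b (L.drop (k + 1)) v)))
  | [], v => by simp
  | ε :: L, v => by
    have key : run b (ε :: L) v =
        st b ε (Pf (run b L v)) + st b ε (Qf (run b L v)) := by
      rw [run_cons, ← st_add, Pf_add_Qf]
    have expand : Qf (st b ε (Qf (run b L v))) =
        runQ b (ε :: L) v + ∑ k ∈ Finset.range L.length,
          runQ b (ε :: L.take k) (st b (L.getD k false) (Pf (run b (L.drop (k + 1)) v))) := by
      rw [FR L v, st_add, st_sum, map_add, map_sum, runQ_cons]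
      congr 1
    rw [key, map_add, expand]
    rw [List.length_cons, Finset.sum_range_succ']
    have h0 : ∀ k, runQ b ((ε :: L).take (k + 1))
        (st b ((ε :: L).getD (k + 1) false) (Pf (run b ((ε :: L).drop (k + 1 + 1)) v)))
        = runQ b (ε :: L.take k) (st b (L.getD k false) (Pf (run b (L.drop (k + 1)) v))) := by
      intro k; rfl
    simp only [h0]
    have h1 : runQ b ((ε :: L).take 0)
        (st b ((ε :: L).getD 0 false) (Pf (run b ((ε :: L).drop (0 + 1)) v)))
        = Qf (st b ε (Pf (run b L v))) := rfl
    rw [h1]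
    abel

end

end MomAux
namespace MomAux

noncomputable section

attribute [local instance] Classical.propDecidable

variable {r : ℕ} (b : Fin r → Fin r → ℝ)

/-! ### Color conservation -/

lemma col_popI (y : W r) : col (popI y) = col (Sum.inr y) := by
  obtain ⟨hd, t, h1, h2, h3⟩ := y
  cases t with
  | nil => rfl
  | cons z t => rfl

lemma col_cns (x : MLetter r Lab) (y : W r) (hc) :
    col (Sum.inr (cns x y hc)) = col (Sum.inr y) := by
  simp only [col, lastL_cns]

lemma col_sing (x : MLetter r Lab) : col (Sum.inr (sing x) : I r) = x.1.2 := rfl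

lemma st_col (ε : Bool) (q : Fin r) (v : I r → ℂ)
    (hv : ∀ i, col i ≠ q → v i = 0) :
    ∀ j, col j ≠ q → st b ε v j = 0 := by
  intro j hj
  cases j with
  | inl t =>
    rw [st_inl]
    refine Finset.sum_eq_zero fun p _ => ?_
    rw [hv _ (by rw [col_sing]; exact hj), mul_zero]
  | inr y =>
    rw [st_inr]
    rw [Finset.sum_eq_zero fun p _ => by rw [hv _ (by rwa [col_cns]), mul_zero]]
    rw [hv _ (by rwa [col_popI]), mul_zero]
    simp

lemma run_col (L : List Bool) (q : Fin r) :
    ∀ i, col i ≠ q → run b L (dl (Sum.inl q)) i = 0 := by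
  induction L with
  | nil =>
    intro i hi
    simp only [run_nil, dl]
    rw [if_neg]
    rintro rfl; exact hi rfl
  | cons ε L ih =>
    intro i hi
    rw [run_cons]
    exact st_col b ε q _ ih i hi

lemma Pf_run (L : List Bool) (q : Fin r) :
    Pf (run b L (dl (Sum.inl q))) = Mnt b q L • dl (Sum.inl q) := by
  funext i
  cases i with
  | inl t =>
    by_cases ht : t = q
    · subst ht
      simp [dl, Mnt]
    · rw [Pf_inl, run_col b L q _ (by simpa [col] using ht)]
      simp [dl, Sum.inl.injEq, ht]
  | inr y => simp [dl]

/-! ### Parity -/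

lemma len_cns (x : MLetter r Lab) (y : W r) (hc) :
    len (Sum.inr (cns x y hc) : I r) = len (Sum.inr y) + 1 := by
  simp [len, cns]

lemma len_popI (y : W r) : len (popI y) + 1 = len (Sum.inr y) := by
  obtain ⟨hd, t, h1, h2, h3⟩ := y
  cases t with
  | nil => rfl
  | cons z t => rfl

lemma st_parity (ε : Bool) (c : ℕ) (v : I r → ℂ)
    (hv : ∀ i, len i % 2 ≠ c % 2 → v i = 0) :
    ∀ j, len j % 2 ≠ (c + 1) % 2 → st b ε v j = 0 := by
  intro j hj
  cases j with
  | inl t =>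
    rw [st_inl]
    refine Finset.sum_eq_zero fun p _ => ?_
    rw [hv _ ?_, mul_zero]
    have h0 : len (Sum.inl t : I r) = 0 := rfl
    have h1 : len (Sum.inr (sing ((p, t), annl ε)) : I r) = 1 := rfl
    rw [h0] at hj; rw [h1]
    omega
  | inr y =>
    rw [st_inr]
    have hy : len (Sum.inr y : I r) % 2 ≠ (c + 1) % 2 := hj
    rw [Finset.sum_eq_zero fun p _ => ?_]
    · rw [hv _ ?_, mul_zero]
      · simp
      · have := len_popI y
        omega
    · rw [hv _ ?_, mul_zero]
      rw [len_cns]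
      omega

lemma run_parity (L : List Bool) (q : Fin r) :
    ∀ i, len i % 2 ≠ L.length % 2 → run b L (dl (Sum.inl q)) i = 0 := by
  induction L with
  | nil =>
    intro i hi
    simp only [run_nil, dl]
    rw [if_neg]
    rintro rfl; exact hi rfl
  | cons ε L ih =>
    intro i hi
    rw [run_cons]
    exact st_parity b ε L.length _ ih i (by simpa [Nat.add_mod] using hi)

lemma Mnt_odd (L : List Bool) (q : Fin r) (hL : L.length % 2 = 1) : Mnt b q L = 0 := by
  have : len (Sum.inl q : I r) % 2 ≠ L.length % 2 := by
    show (0 : ℕ) % 2 ≠ _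
    omega
  exact run_parity b L q _ this

end

end MomAux
namespace MomAux

noncomputable section

attribute [local instance] Classical.propDecidable

variable {r : ℕ} (b : Fin r → Fin r → ℝ)

def strip : (y : W r) → y.tail ≠ [] → W r
  | ⟨hd, z :: t, _, _, hc⟩, _ =>
      ⟨hd, (z :: t).dropLast, Set.mem_univ _, fun y _ => Set.mem_univ _, by
        have h := hc.dropLast
        rwa [List.dropLast_cons₂] at h⟩
  | ⟨_, [], _, _, _⟩, h => absurd rfl h

lemma strip_head (y : W r) (h : y.tail ≠ []) : (strip y h).head = y.head := by
  obtain ⟨hd, t, a1, a2, a3⟩ := y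
  cases t with
  | nil => exact absurd rfl h
  | cons z t => rfl

lemma strip_tail (y : W r) (h : y.tail ≠ []) : (strip y h).tail = y.tail.dropLast := by
  obtain ⟨hd, t, a1, a2, a3⟩ := y
  cases t with
  | nil => exact absurd rfl h
  | cons z t => rfl

lemma strip_cns (x : MLetter r Lab) (y : W r) (hc) (h) :
    strip (cns x y hc) h = if h2 : y.tail = [] then sing x else
      cns x (strip y h2) (by rwa [strip_head]) := by
  split_ifs with h2
  · refine W.ext ?_ ?_
    · rw [strip_head]; rfl
    · rw [strip_tail]
      obtain ⟨hd, t, a1, a2, a3⟩ := y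
      dsimp at h2; subst h2; rfl
  · refine W.ext ?_ ?_
    · rw [strip_head]; rfl
    · rw [strip_tail, cns_tail, cns_tail, strip_head, strip_tail]
      obtain ⟨hd, t, a1, a2, a3⟩ := y
      cases t with
      | nil => exact absurd rfl h2
      | cons z t => exact List.dropLast_cons₂

def Phi (c : MLetter r Lab) (v : I r → ℂ) : I r → ℂ
  | Sum.inl _ => 0
  | Sum.inr y => if lastL y = c then
      (if h : y.tail = [] then v (Sum.inl c.1.1) else v (Sum.inr (strip y h))) else 0

lemma Phi_inl (c : MLetter r Lab) (v : I r → ℂ) (t : Fin r) :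
    Phi c v (Sum.inl t) = 0 := rfl

lemma Phi_inr (c : MLetter r Lab) (v : I r → ℂ) (y : W r) :
    Phi c v (Sum.inr y) = if lastL y = c then
      (if h : y.tail = [] then v (Sum.inl c.1.1) else v (Sum.inr (strip y h))) else 0 := rfl

/-- The key intertwining step. -/
lemma Phi_st (c : MLetter r Lab) (ε : Bool) (v : I r → ℂ) :
    Qf (st b ε (Phi c v)) = Phi c (st b ε v) := by
  funext j
  cases j with
  | inl t => rw [Qf_inl, Phi_inl]
  | inr y =>
    rw [Qf_inr, Phi_inr, st_inr]
    obtain ⟨hd, tl, a1, a2, a3⟩ := y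
    cases tl with
    | nil =>
      have hpop : popI (⟨hd, [], a1, a2, a3⟩ : W r) = Sum.inl hd.1.2 := rfl
      rw [hpop, Phi_inl, mul_zero, ite_self, zero_add]
      have hlast : lastL (⟨hd, [], a1, a2, a3⟩ : W r) = hd := rfl
      rw [hlast]
      simp only [dif_pos rfl]
      by_cases hc : hd = c
      · rw [if_pos hc, st_inl]
        subst hc
        refine Finset.sum_congr rfl fun p _ => ?_
        congr 1
        rw [Phi_inr]
        have h1 : lastL (cns ((p, hd.1.1), annl ε) (⟨hd, [], a1, a2, a3⟩ : W r) rfl) = hd :=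
          rfl
        rw [h1, if_pos rfl]
        have h2 : (cns ((p, hd.1.1), annl ε) (⟨hd, [], a1, a2, a3⟩ : W r) rfl).tail ≠ [] := by
          simp
        rw [dif_neg h2]
        refine congrArg v (congrArg Sum.inr ?_)
        rw [strip_cns]
        exact dif_pos rfl
      · rw [if_neg hc]
        refine Finset.sum_eq_zero fun p _ => ?_
        rw [Phi_inr]
        have h1 : lastL (cns ((p, hd.1.1), annl ε) (⟨hd, [], a1, a2, a3⟩ : W r) rfl) = hd :=
          rfl
        rw [h1, if_neg hc, mul_zero]
    | cons z t =>
      set Y : W r := ⟨hd, z :: t, a1, a2, a3⟩ with hY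
      set P : W r := ⟨z, t, Set.mem_univ _, fun y _ => Set.mem_univ _, a3.tail⟩ with hP
      have hpop : popI Y = Sum.inr P := rfl
      have hlast : lastL Y = lastL P := rfl
      have hne : Y.tail ≠ [] := by simp [hY]
      by_cases hl : lastL Y = c
      · rw [if_pos hl, dif_neg hne]
        set x : W r := strip Y hne with hx
        have hxhead : x.head = hd := strip_head _ _
        rw [st_inr]
        congr 1
        · -- annihilation parts
          rw [hpop, hxhead]
          have hYhead : Y.head = hd := rfl
          rw [hYhead]
          refine if_congr Iff.rfl ?_ rfl
          congr 1
          -- Phi c v (Sum.inr P) = v (popI x)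
          rw [Phi_inr, if_pos (hlast.symm.trans hl)]
          by_cases ht : t = []
          · subst ht
            rw [dif_pos rfl]
            have hzc : z = c := hlast.symm.trans hl
            have hxt : x.tail = [] := by rw [hx, strip_tail]; rfl
            rw [popI_nil x hxt]
            refine congrArg v ?_
            have h12 : hd.1.2 = z.1.1 := chain_head Y rfl
            congr 1
            rw [hxhead, h12, hzc]
          · rw [dif_neg (by simpa [hP] using ht)]
            obtain ⟨u, t', rfl⟩ : ∃ u t', t = u :: t' := by
              cases t with
              | nil => exact absurd rfl ht
              | cons u t' => exact ⟨u, t', rfl⟩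
            have hxtail : x.tail = z :: (u :: t').dropLast := by
              rw [hx, strip_tail]; exact List.dropLast_cons₂
            obtain ⟨hc', hp⟩ := popI_cons x hxtail
            rw [hp]
            refine congrArg v (congrArg Sum.inr (W.ext ?_ ?_))
            · rw [strip_head]
            · rw [strip_tail]
        · -- creation parts
          refine Finset.sum_congr rfl fun p _ => ?_
          have e0 : sq b p Y.head.1.1 = sq b p x.head.1.1 := by rw [hxhead]
          have e1 : Phi c v (Sum.inr (cns ((p, Y.head.1.1), annl ε) Y rfl)) =
              v (Sum.inr (cns ((p, x.head.1.1), annl ε) x rfl)) := by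
            rw [Phi_inr, if_pos (by rw [lastL_cns]; exact hl), dif_neg (by simp)]
            refine congrArg v (congrArg Sum.inr ?_)
            rw [strip_cns, dif_neg hne]
            exact W.ext (by rw [cns_head, cns_head, hxhead]) rfl
          rw [e1, e0]
      · rw [if_neg hl, hpop, Phi_inr,
          if_neg (show ¬lastL P = c from fun hh => hl (hlast.trans hh)),
          mul_zero, ite_self, zero_add]
        refine Finset.sum_eq_zero fun p _ => ?_
        rw [Phi_inr, if_neg (show ¬lastL (cns ((p, Y.head.1.1), annl ε) Y rfl) = c from by
          rw [lastL_cns]; exact hl), mul_zero]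

end

end MomAux
namespace MomAux

noncomputable section

attribute [local instance] Classical.propDecidable

variable {r : ℕ} (b : Fin r → Fin r → ℝ)

lemma runQ_dl_vac (L : List Bool) (q : Fin r) :
    runQ b L (dl (Sum.inl q)) = 0 := by
  induction L with
  | nil =>
    funext j
    cases j with
    | inl t => rfl
    | inr y =>
      show dl (Sum.inl q) (Sum.inr y) = 0
      simp [dl]
  | cons ε L ih =>
    rw [runQ_cons, ih]
    have h0 : st b ε (0 : I r → ℂ) = 0 := map_zero (stL b ε)
    rw [h0, map_zero]

lemma runQ_dl_sing (c : MLetter r Lab) (L : List Bool) :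
    runQ b L (dl (Sum.inr (sing c))) = Phi c (run b L (dl (Sum.inl c.1.1))) := by
  induction L with
  | nil =>
    funext j
    cases j with
    | inl t => rfl
    | inr y =>
      rw [runQ_nil, Qf_inr, Phi_inr, run_nil]
      by_cases hy : y = sing c
      · subst hy
        rw [if_pos (show lastL (sing c) = c from rfl),
          dif_pos (show (sing c).tail = [] from rfl)]
        simp [dl]
      · rw [show dl (Sum.inr (sing c)) (Sum.inr y) = 0 from by
          simp only [dl, if_neg (fun h : (Sum.inr y : I r) = Sum.inr (sing c) =>
            hy (Sum.inr.inj h))]]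
        by_cases hl : lastL y = c
        · rw [if_pos hl]
          by_cases ht : y.tail = []
          · exact absurd (W.ext ((lastL_nil y ht).symm.trans hl) ht) hy
          · rw [dif_neg ht]
            simp [dl]
        · rw [if_neg hl]
  | cons ε L ih =>
    rw [runQ_cons, ih, Phi_st, run_cons]

lemma st_dl_inl (ε : Bool) (q : Fin r) :
    st b ε (dl (Sum.inl q)) =
      ∑ s, sq b s q • dl (Sum.inr (sing ((s, q), lamb ε)) : I r) := by
  funext j
  rw [Finset.sum_apply]
  cases j with
  | inl t =>
    rw [st_inl]
    rw [Finset.sum_eq_zero fun p _ => by simp [dl], Finset.sum_eq_zero fun p _ => by simp [dl]]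
  | inr y =>
    rw [st_inr,
        Finset.sum_eq_zero (fun p _ => by simp [dl] : ∀ p ∈ Finset.univ,
          sq b p y.head.1.1 * dl (Sum.inl q) (Sum.inr (cns ((p, y.head.1.1), annl ε) y rfl)) = 0),
        add_zero]
    obtain ⟨hd, tl, a1, a2, a3⟩ := y
    cases tl with
    | cons z t =>
      have hpop : popI (⟨hd, z :: t, a1, a2, a3⟩ : W r) =
          Sum.inr ⟨z, t, Set.mem_univ _, fun y _ => Set.mem_univ _, a3.tail⟩ := rfl
      rw [hpop]
      rw [show ∀ w : W r, dl (Sum.inl q) (Sum.inr w) = 0 from fun w => by simp [dl]]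
      rw [mul_zero, ite_self]
      symm
      refine Finset.sum_eq_zero fun s _ => ?_
      have hne : (Sum.inr (⟨hd, z :: t, a1, a2, a3⟩ : W r) : I r)
          ≠ Sum.inr (sing ((s, q), lamb ε)) := by
        intro h
        have ht := congrArg MWord.tail (Sum.inr.inj h)
        simp [sing] at ht
      rw [Pi.smul_apply, show dl (Sum.inr (sing ((s, q), lamb ε)) : I r)
        (Sum.inr ⟨hd, z :: t, a1, a2, a3⟩) = 0 from by simp only [dl, if_neg hne], smul_zero]
    | nil =>
      have hpop : popI (⟨hd, [], a1, a2, a3⟩ : W r) = Sum.inl hd.1.2 := rfl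
      rw [hpop]
      have hval : ∀ s : Fin r,
          dl (Sum.inr (sing ((s, q), lamb ε)) : I r) (Sum.inr ⟨hd, [], a1, a2, a3⟩)
          = if hd = ((s, q), lamb ε) then 1 else 0 := by
        intro s
        simp only [dl]
        congr 1
        rw [eq_iff_iff]
        constructor
        · intro h
          exact congrArg MWord.head (Sum.inr.inj h)
        · intro h
          exact congrArg Sum.inr (W.ext h rfl)
      simp only [Pi.smul_apply, hval, smul_eq_mul]
      rw [Finset.sum_congr rfl fun s _ => by
        rw [mul_ite, mul_one, mul_zero]]
      by_cases h2 : hd.2 = lamb ε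
      · by_cases h1 : hd.1.2 = q
        · rw [if_pos h2]
          have : ∀ s, (if hd = ((s, q), lamb ε) then sq b s q else 0)
              = if s = hd.1.1 then sq b hd.1.1 q else 0 := by
            intro s
            by_cases hs : s = hd.1.1
            · subst hs
              rw [if_pos (by
                refine Prod.ext ?_ h2
                refine Prod.ext rfl h1)]
              rw [if_pos rfl]
            · rw [if_neg (fun h => hs (congrArg (fun x => x.1.1) h).symm), if_neg hs]
          rw [Finset.sum_congr rfl fun s _ => this s, Finset.sum_ite_eq' Finset.univ hd.1.1
            (fun _ => sq b hd.1.1 q), if_pos (Finset.mem_univ _)]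
          simp only [dl, if_pos (congrArg Sum.inl h1 : (Sum.inl hd.1.2 : I r) = Sum.inl q)]
          rw [mul_one, h1]
        · rw [show dl (Sum.inl q) (Sum.inl hd.1.2 : I r) = 0 from by
            simp [dl, fun h => h1 h], mul_zero, ite_self]
          rw [Finset.sum_eq_zero fun s _ => ?_]
          rw [if_neg (fun h => h1 (congrArg (fun x => x.1.2) h))]
      · rw [if_neg h2]
        rw [Finset.sum_eq_zero fun s _ => ?_]
        rw [if_neg (fun h => h2 (congrArg (fun x => x.2) h))]

lemma sq_mul_self (hb : ∀ p q, 0 ≤ b p q) (p q : Fin r) :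
    sq b p q * sq b p q = ((b p q : ℝ) : ℂ) := by
  rw [sq, ← Complex.ofReal_mul, Real.mul_self_sqrt (hb p q)]

lemma eval_term (q p : Fin r) (ε₀ ε' : Bool) (L : List Bool) :
    runQ b L (st b ε' (dl (Sum.inl q))) (Sum.inr (sing ((p, q), annl ε₀)))
      = if ε' ≠ ε₀ then sq b p q * Mnt b p L else 0 := by
  rw [st_dl_inl, runQ_sum, Finset.sum_apply]
  have hterm : ∀ s : Fin r,
      runQ b L (sq b s q • dl (Sum.inr (sing ((s, q), lamb ε')) : I r))
        (Sum.inr (sing ((p, q), annl ε₀)))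
      = if s = p ∧ lamb ε' = annl ε₀ then sq b s q * Mnt b s L else 0 := by
    intro s
    rw [runQ_smul, Pi.smul_apply, runQ_dl_sing, Phi_inr, smul_eq_mul]
    have hlast : lastL (sing ((p, q), annl ε₀)) = ((p, q), annl ε₀) := rfl
    rw [hlast]
    by_cases hc : s = p ∧ lamb ε' = annl ε₀
    · obtain ⟨rfl, hc2⟩ := hc
      rw [if_pos (show ((s, q), annl ε₀) = ((s, q), lamb ε') from by rw [hc2]),
        dif_pos (show (sing ((s, q), annl ε₀)).tail = [] from rfl), if_pos ⟨rfl, hc2⟩]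
      rfl
    · rw [if_neg hc, if_neg ?_, mul_zero]
      intro h
      have h1 := congrArg (fun x : MLetter r Lab => x.1.1) h
      have h2 := congrArg (fun x : MLetter r Lab => x.2) h
      exact hc ⟨h1.symm, h2.symm⟩
  rw [Finset.sum_congr rfl fun s _ => hterm s]
  by_cases hc2 : lamb ε' = annl ε₀
  · rw [if_pos ((lamb_eq_annl_iff ε' ε₀).mp hc2)]
    have hsimp : ∀ s : Fin r, (if s = p ∧ lamb ε' = annl ε₀ then sq b s q * Mnt b s L else 0)
        = (if s = p then sq b s q * Mnt b s L else 0) := by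
      intro s
      by_cases hs : s = p
      · simp [hs, hc2]
      · simp [hs]
    rw [Finset.sum_congr rfl fun s _ => hsimp s]
    rw [Finset.sum_ite_eq' Finset.univ p (fun s => sq b s q * Mnt b s L),
      if_pos (Finset.mem_univ _)]
  · rw [if_neg (fun hne => hc2 ((lamb_eq_annl_iff ε' ε₀).mpr hne)),
      Finset.sum_eq_zero fun s _ => by rw [if_neg (fun hh => hc2 hh.2)]]

/-- The core recurrence, for lists. -/
lemma core (hb : ∀ p q, 0 ≤ b p q) (q : Fin r) (ε₀ : Bool) (rest : List Bool) :
    Mnt b q (ε₀ :: rest) = ∑ k ∈ Finset.range rest.length,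
      (if rest.getD k false ≠ ε₀ then
        ∑ p, ((b p q : ℝ) : ℂ) * Mnt b p (rest.take k) * Mnt b q (rest.drop (k + 1)) else 0) := by
  have h1 : Mnt b q (ε₀ :: rest) = ∑ p, sq b p q *
      run b rest (dl (Sum.inl q)) (Sum.inr (sing ((p, q), annl ε₀))) := by
    rw [Mnt, run_cons, st_inl]
  have h2 : ∀ p, run b rest (dl (Sum.inl q)) (Sum.inr (sing ((p, q), annl ε₀)))
      = ∑ k ∈ Finset.range rest.length, Mnt b q (rest.drop (k + 1)) *
          (if (rest.getD k false) ≠ ε₀ then sq b p q * Mnt b p (rest.take k) else 0) := by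
    intro p
    have hQ : run b rest (dl (Sum.inl q)) (Sum.inr (sing ((p, q), annl ε₀)))
        = Qf (run b rest (dl (Sum.inl q))) (Sum.inr (sing ((p, q), annl ε₀))) := rfl
    rw [hQ, FR b rest (dl (Sum.inl q)), runQ_dl_vac, zero_add, Finset.sum_apply]
    refine Finset.sum_congr rfl fun k hk => ?_
    rw [Pf_run, st_smul, runQ_smul, Pi.smul_apply, smul_eq_mul, eval_term, Mnt]
  rw [h1]
  rw [Finset.sum_congr rfl fun p _ => by rw [h2 p, Finset.mul_sum]]
  rw [Finset.sum_comm]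
  refine Finset.sum_congr rfl fun k hk => ?_
  by_cases hc : rest.getD k false ≠ ε₀
  · rw [if_pos hc]
    refine Finset.sum_congr rfl fun p _ => ?_
    rw [if_pos hc]
    have hsq := sq_mul_self b hb p q
    have : sq b p q * (Mnt b q (rest.drop (k + 1)) *
        (sq b p q * Mnt b p (rest.take k)))
        = (sq b p q * sq b p q) * Mnt b p (rest.take k) * Mnt b q (rest.drop (k + 1)) := by
      ring
    rw [this, hsq]
  · rw [if_neg hc, Finset.sum_eq_zero fun p _ => by rw [if_neg hc, mul_zero, mul_zero]]

end

end MomAux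

namespace MomAux

noncomputable section

attribute [local instance] Classical.propDecidable

variable {r : ℕ}

abbrev MS (r : ℕ) := MSpace r (Set.univ : Set (Fin r × Fin r)) Lab

lemma mvec_eq_single (i : I r) : (mvec i : MS r) = lp.single 2 i 1 := by
  unfold mvec
  congr

lemma mvec_apply (i j : I r) : (mvec i : MS r) j = if j = i then 1 else 0 := by
  rw [mvec_eq_single, lp.single_apply]
  split_ifs with h
  · subst h; simp
  · simp [h]

lemma inner_mvec (f : MS r) (j : I r) : @inner ℂ _ _ (mvec j : MS r) f = f j := by
  rw [mvec_eq_single, lp.inner_single_left]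
  simp [RCLike.inner_apply]

lemma inner_mvec_mvec (i j : I r) :
    @inner ℂ _ _ (mvec i : MS r) (mvec j : MS r) = if i = j then 1 else 0 := by
  rw [inner_mvec, mvec_apply]

end

end MomAux
namespace MomAux

noncomputable section

attribute [local instance] Classical.propDecidable

variable {r : ℕ} {b : Fin r → Fin r → ℝ}
  {C : (p q : Fin r) → (Unit ⊕ Unit) →
      (MSpace r Set.univ (Unit ⊕ Unit) →L[ℂ] MSpace r Set.univ (Unit ⊕ Unit))}
  (hC : ∀ p q l, IsMFCreation (b p q) p q l (Set.mem_univ _) (C p q l))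

lemma sing_eq_single (x : MLetter r Lab) (hx) : sing x = MWord.single x hx := W.ext rfl rfl

lemma cns_eq_cons (x : MLetter r Lab) (hx) (w : W r) (hc) :
    cns x w hc = MWord.cons x hx w hc := W.ext rfl rfl

lemma conj_sq (p q : Fin r) : (starRingEnd ℂ) (sq b p q) = sq b p q :=
  Complex.conj_ofReal _

lemma popI_inl_iff (y : W r) (t : Fin r) :
    popI y = Sum.inl t ↔ y.tail = [] ∧ y.head.1.2 = t := by
  obtain ⟨hd, tl, a1, a2, a3⟩ := y
  cases tl with
  | nil =>
    show Sum.inl hd.1.2 = Sum.inl t ↔ _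
    simp
  | cons z tl =>
    constructor
    · intro h
      exact absurd h (by
        show Sum.inr _ ≠ Sum.inl t
        simp)
    · intro h
      exact absurd h.1 (by simp)

lemma popI_inr_iff (y x : W r) :
    popI y = Sum.inr x ↔ y.tail = x.head :: x.tail := by
  obtain ⟨hd, tl, a1, a2, a3⟩ := y
  cases tl with
  | nil =>
    constructor
    · intro h
      exact absurd h (by show Sum.inl _ ≠ _; simp)
    · intro h
      exact absurd h (by simp)
  | cons z tl =>
    show Sum.inr (⟨z, tl, _, _, _⟩ : W r) = Sum.inr x ↔ (z :: tl = x.head :: x.tail)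
    constructor
    · intro h
      rw [← Sum.inr.inj h]
    · intro h
      exact congrArg Sum.inr (W.ext (List.head_eq_of_cons_eq h)
        (List.tail_eq_of_cons_eq h))

include hC

lemma creation_vac (p q t : Fin r) (l : Lab) :
    C p q l (mvec (Sum.inl t) : MS r) =
      if t = q then sq b p q • mvec (Sum.inr (sing ((p, q), l))) else 0 := by
  by_cases h : t = q
  · subst h
    rw [if_pos rfl, sing_eq_single _ (Set.mem_univ _)]
    exact (hC p t l).1
  · rw [if_neg h]
    exact (hC p q l).2.1 t h

lemma creation_word (p q : Fin r) (l : Lab) (y : W r) :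
    C p q l (mvec (Sum.inr y) : MS r) =
      if h : y.head.1.1 = q then sq b p q • mvec (Sum.inr (cns ((p, q), l) y h.symm))
      else 0 := by
  by_cases h : y.head.1.1 = q
  · rw [dif_pos h, cns_eq_cons _ (Set.mem_univ _)]
    exact (hC p q l).2.2.1 y h
  · rw [dif_neg h]
    exact (hC p q l).2.2.2 y h

lemma adjC_vac (p q t : Fin r) (l : Lab) :
    (ContinuousLinearMap.adjoint (C p q l)) (mvec (Sum.inl t) : MS r) = 0 := by
  apply lp.ext
  funext i
  have h1 : (ContinuousLinearMap.adjoint (C p q l) (mvec (Sum.inl t) : MS r)) i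
      = @inner ℂ _ _ (C p q l (mvec i) : MS r) (mvec (Sum.inl t) : MS r) := by
    rw [← inner_mvec, ContinuousLinearMap.adjoint_inner_right]
  rw [h1]
  have h0 : ((0 : MS r) : I r → ℂ) i = 0 := by rw [lp.coeFn_zero]; rfl
  rw [h0]
  cases i with
  | inl t' =>
    rw [creation_vac hC]
    split_ifs
    · rw [inner_smul_left, inner_mvec_mvec, if_neg (by simp)]
      simp
    · simp
  | inr x =>
    rw [creation_word hC]
    split_ifs
    · rw [inner_smul_left, inner_mvec_mvec, if_neg (by simp)]
      simp
    · simp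

lemma adjC_word (p q : Fin r) (l : Lab) (y : W r) :
    (ContinuousLinearMap.adjoint (C p q l)) (mvec (Sum.inr y) : MS r) =
      if y.head = ((p, q), l) then sq b p q • mvec (popI y) else 0 := by
  apply lp.ext
  funext i
  have h1 : (ContinuousLinearMap.adjoint (C p q l) (mvec (Sum.inr y) : MS r)) i
      = @inner ℂ _ _ (C p q l (mvec i) : MS r) (mvec (Sum.inr y) : MS r) := by
    rw [← inner_mvec, ContinuousLinearMap.adjoint_inner_right]
  rw [h1]
  have hRHS : ((if y.head = ((p, q), l) then sq b p q • mvec (popI y) else 0 : MS r) : I r → ℂ) i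
      = if y.head = ((p, q), l) then (sq b p q * if i = popI y then 1 else 0) else 0 := by
    by_cases h : y.head = ((p, q), l)
    · rw [if_pos h, if_pos h, lp.coeFn_smul, Pi.smul_apply, mvec_apply, smul_eq_mul]
    · rw [if_neg h, if_neg h, lp.coeFn_zero]; rfl
  rw [hRHS]
  cases i with
  | inl t' =>
    rw [creation_vac hC]
    by_cases ht : t' = q
    · rw [if_pos ht, inner_smul_left, inner_mvec_mvec, conj_sq]
      by_cases hy : (Sum.inr (sing ((p, q), l)) : I r) = Sum.inr y
      · rw [if_pos hy]
        have hyw : y = sing ((p, q), l) := (Sum.inr.inj hy).symm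
        have hh : y.head = ((p, q), l) := by rw [hyw]; rfl
        have hpp : (Sum.inl t' : I r) = popI y :=
          ((popI_inl_iff y t').mpr ⟨by rw [hyw]; rfl, by rw [hh, ht]⟩).symm
        rw [if_pos hh, if_pos hpp]
      · rw [if_neg hy, mul_zero]
        symm
        by_cases hh : y.head = ((p, q), l)
        · rw [if_pos hh, if_neg (fun hcon => by
            have h2 := (popI_inl_iff y t').mp hcon.symm
            exact hy (congrArg Sum.inr (W.ext hh h2.1).symm)), mul_zero]
        · rw [if_neg hh]
    · rw [if_neg ht, inner_zero_left]
      symm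
      by_cases hh : y.head = ((p, q), l)
      · rw [if_pos hh, if_neg (fun hcon => by
          have h2 := (popI_inl_iff y t').mp hcon.symm
          exact ht (by rw [← h2.2, hh])), mul_zero]
      · rw [if_neg hh]
  | inr x =>
    rw [creation_word hC]
    by_cases hx : x.head.1.1 = q
    · rw [dif_pos hx, inner_smul_left, inner_mvec_mvec, conj_sq]
      by_cases hy : (Sum.inr (cns ((p, q), l) x hx.symm) : I r) = Sum.inr y
      · rw [if_pos hy]
        have hyw : y = cns ((p, q), l) x hx.symm := (Sum.inr.inj hy).symm
        have hh : y.head = ((p, q), l) := by rw [hyw]; rfl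
        have hpx : (Sum.inr x : I r) = popI y :=
          ((popI_inr_iff y x).mpr (by rw [hyw]; rfl)).symm
        rw [if_pos hh, if_pos hpx]
      · rw [if_neg hy, mul_zero]
        symm
        by_cases hh : y.head = ((p, q), l)
        · rw [if_pos hh, if_neg (fun hcon => by
            have h2 := (popI_inr_iff y x).mp hcon.symm
            exact hy (congrArg Sum.inr (W.ext hh h2).symm)), mul_zero]
        · rw [if_neg hh]
    · rw [dif_neg hx, inner_zero_left]
      symm
      by_cases hh : y.head = ((p, q), l)
      · rw [if_pos hh, if_neg (fun hcon => by
          have h2 := (popI_inr_iff y x).mp hcon.symm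
          have hch := chain_head y h2
          exact hx (by rw [← hch, hh])), mul_zero]
      · rw [if_neg hh]

end

end MomAux
namespace MomAux

noncomputable section

attribute [local instance] Classical.propDecidable

variable {r : ℕ} {b : Fin r → Fin r → ℝ}
  {C : (p q : Fin r) → (Unit ⊕ Unit) →
      (MSpace r Set.univ (Unit ⊕ Unit) →L[ℂ] MSpace r Set.univ (Unit ⊕ Unit))}
  (hC : ∀ p q l, IsMFCreation (b p q) p q l (Set.mem_univ _) (C p q l))

lemma zetaSum_eps (ε : Bool) :
    sOp ε (zetaSum C) = ∑ pq : Fin r × Fin r,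
      (C pq.1 pq.2 (lamb ε) + ContinuousLinearMap.adjoint (C pq.2 pq.1 (annl ε))) := by
  cases ε with
  | true =>
    show zetaSum C = _
    rw [zetaSum]
    rfl
  | false =>
    show ContinuousLinearMap.adjoint (zetaSum C) = _
    rw [zetaSum]
    have hst : ∀ T : MS r →L[ℂ] MS r, ContinuousLinearMap.adjoint T = star T := fun T =>
      (ContinuousLinearMap.star_eq_adjoint T).symm
    simp only [hst, star_sum, star_add, star_star]
    exact Fintype.sum_equiv (Equiv.prodComm (Fin r) (Fin r)) _ _ fun pq => add_comm _ _

lemma sOp_adjoint (ε : Bool) (x : MS r →L[ℂ] MS r) :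
    ContinuousLinearMap.adjoint (sOp ε x) = sOp (!ε) x := by
  cases ε <;> simp [sOp, ContinuousLinearMap.adjoint_adjoint]

include hC

lemma sOp_zeta_vac (ε : Bool) (t : Fin r) :
    sOp ε (zetaSum C) (mvec (Sum.inl t) : MS r) =
      ∑ s, sq b s t • mvec (Sum.inr (sing ((s, t), lamb ε))) := by
  rw [zetaSum_eps, ContinuousLinearMap.sum_apply]
  simp only [ContinuousLinearMap.add_apply]
  rw [Finset.sum_congr rfl (fun pq _ => by
    rw [creation_vac hC, adjC_vac hC, add_zero])]
  rw [Fintype.sum_prod_type]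
  refine Finset.sum_congr rfl fun p _ => ?_
  rw [Finset.sum_ite_eq, if_pos (Finset.mem_univ t)]

lemma sOp_zeta_word (ε : Bool) (y : W r) :
    sOp ε (zetaSum C) (mvec (Sum.inr y) : MS r) =
      (if y.head.2 = annl ε then sq b y.head.1.1 y.head.1.2 • mvec (popI y) else 0)
      + ∑ s, sq b s y.head.1.1 • mvec (Sum.inr (cns ((s, y.head.1.1), lamb ε) y rfl)) := by
  rw [zetaSum_eps, ContinuousLinearMap.sum_apply]
  simp only [ContinuousLinearMap.add_apply]
  rw [Finset.sum_add_distrib]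
  have hA : (∑ pq : Fin r × Fin r, C pq.1 pq.2 (lamb ε) (mvec (Sum.inr y) : MS r))
      = ∑ s, sq b s y.head.1.1 • mvec (Sum.inr (cns ((s, y.head.1.1), lamb ε) y rfl)) := by
    rw [Finset.sum_congr rfl (fun pq _ => creation_word hC pq.1 pq.2 (lamb ε) y)]
    rw [Fintype.sum_prod_type]
    refine Finset.sum_congr rfl fun s _ => ?_
    rw [Finset.sum_dite_eq, if_pos (Finset.mem_univ _)]
  have hBtot : (∑ pq : Fin r × Fin r,
        ContinuousLinearMap.adjoint (C pq.2 pq.1 (annl ε)) (mvec (Sum.inr y) : MS r))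
      = (if y.head.2 = annl ε then sq b y.head.1.1 y.head.1.2 • mvec (popI y) else 0) := by
    rw [Finset.sum_congr rfl (fun pq _ => adjC_word hC pq.2 pq.1 (annl ε) y)]
    have hB : ∀ pq : Fin r × Fin r,
        (if y.head = ((pq.2, pq.1), annl ε) then sq b pq.2 pq.1 • mvec (popI y) else (0 : MS r))
        = if pq = (y.head.1.2, y.head.1.1) then
            (if y.head.2 = annl ε then sq b y.head.1.1 y.head.1.2 • mvec (popI y) else 0)
          else 0 := by
      intro pq
      by_cases h : y.head = ((pq.2, pq.1), annl ε)
      · have h1 : pq.2 = y.head.1.1 := by rw [h]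
        have h2 : pq.1 = y.head.1.2 := by rw [h]
        rw [if_pos h, if_pos (Prod.ext h2 h1), if_pos (by rw [h]), h1, h2]
      · by_cases hpq : pq = (y.head.1.2, y.head.1.1)
        · rw [if_neg h, if_pos hpq, if_neg (fun hl => h ?_)]
          subst hpq
          exact Prod.ext (Prod.ext rfl rfl) hl
        · rw [if_neg h, if_neg hpq]
    rw [Finset.sum_congr rfl fun pq _ => hB pq]
    rw [Finset.sum_ite_eq' Finset.univ ((y.head.1.2, y.head.1.1) : Fin r × Fin r),
      if_pos (Finset.mem_univ _)]
  rw [hA, hBtot, add_comm]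

lemma transfer (L : List Bool) (q : Fin r) :
    ∀ i : I r, @inner ℂ _ _ (mvec i : MS r)
        ((L.map (fun ε => sOp ε (zetaSum C))).prod (mvec (Sum.inl q)))
      = run b L (dl (Sum.inl q)) i := by
  induction L with
  | nil =>
    intro i
    rw [List.map_nil, List.prod_nil, ContinuousLinearMap.one_apply, inner_mvec, mvec_apply]
    rfl
  | cons ε L ih =>
    intro i
    rw [List.map_cons, List.prod_cons, ContinuousLinearMap.mul_apply]
    set u := ((L.map (fun ε => sOp ε (zetaSum C))).prod (mvec (Sum.inl q)) : MS r) with hu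
    have hadj : @inner ℂ _ _ (mvec i : MS r) (sOp ε (zetaSum C) u)
        = @inner ℂ _ _ ((sOp (!ε) (zetaSum C)) (mvec i) : MS r) u := by
      rw [← sOp_adjoint, ContinuousLinearMap.adjoint_inner_left]
    rw [hadj]
    cases i with
    | inl t =>
      rw [sOp_zeta_vac hC, sum_inner, run_cons, st_inl]
      refine Finset.sum_congr rfl fun s _ => ?_
      have hword : sing ((s, t), lamb (!ε)) = sing ((s, t), annl ε) := by rw [lamb_not]
      rw [inner_smul_left, conj_sq, hword, ih]
    | inr y =>
      rw [sOp_zeta_word hC, inner_add_left, sum_inner, run_cons, st_inr]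
      congr 1
      · rw [annl_not]
        by_cases hcond : y.head.2 = lamb ε
        · rw [if_pos hcond, if_pos hcond, inner_smul_left, conj_sq, ih]
        · rw [if_neg hcond, if_neg hcond, inner_zero_left]
      · refine Finset.sum_congr rfl fun s _ => ?_
        have hword : cns ((s, y.head.1.1), lamb (!ε)) y rfl
            = cns ((s, y.head.1.1), annl ε) y rfl := by
          refine W.ext ?_ rfl
          rw [cns_head, cns_head, lamb_not]
        rw [inner_smul_left, conj_sq, hword, ih]

lemma psi_eq_Mnt (q : Fin r) (L : List Bool) :
    PsiM q ((L.map (fun ε => sOp ε (zetaSum C))).prod) = Mnt b q L :=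
  transfer hC L q (Sum.inl q)

lemma psi_ofFn (q : Fin r) (k : ℕ) (ε : Fin k → Bool) :
    PsiM q (List.ofFn (fun j => sOp (ε j) (zetaSum C))).prod = Mnt b q (List.ofFn ε) := by
  rw [show (List.ofFn fun j => sOp (ε j) (zetaSum C))
      = (List.ofFn ε).map (fun e => sOp e (zetaSum C)) from by rw [List.map_ofFn]; rfl]
  exact psi_eq_Mnt hC q (List.ofFn ε)

end

end MomAux
namespace MomAux

noncomputable section

attribute [local instance] Classical.propDecidable

variable {r : ℕ} {b : Fin r → Fin r → ℝ}
  {C : (p q : Fin r) → (Unit ⊕ Unit) →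
      (MSpace r Set.univ (Unit ⊕ Unit) →L[ℂ] MSpace r Set.univ (Unit ⊕ Unit))}
  (hC : ∀ p q l, IsMFCreation (b p q) p q l (Set.mem_univ _) (C p q l))

lemma sum_even_range (m : ℕ) (hm : 1 ≤ m) (f : ℕ → ℂ)
    (hodd : ∀ k, k % 2 = 1 → f k = 0) :
    ∑ k ∈ Finset.range (2 * m - 1), f k = ∑ j ∈ Finset.range m, f (2 * j) := by
  induction m, hm using Nat.le_induction with
  | base => simp
  | succ m hm ih =>
    have h1 : 2 * (m + 1) - 1 = (2 * m - 1) + 1 + 1 := by omega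
    rw [h1, Finset.sum_range_succ, Finset.sum_range_succ, ih,
      Finset.sum_range_succ]
    rw [show (2 * m - 1) + 1 = 2 * m from by omega]
    rw [hodd (2 * m - 1) (by omega), add_zero]

include hC

lemma momentMat_diag (k : ℕ) (e : Fin k → Bool) (q : Fin r) :
    momentMat C k e q q = Mnt b q (List.ofFn e) := by
  rw [momentMat, Matrix.diagonal_apply_eq, psi_ofFn hC]

end

end MomAux

/-- (i) all odd *-moments of `ζ = Σ_{p,q} ζ_{p,q}` vanish; (ii) the diagonal
matrices of moments `C_m(ε)` satisfy the Catalan-type recurrence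
`C_m(ε) = Σ_{j=0}^{m−1} [ε₁ ≠ ε_{2j+2}]·𝒟(C_j(ε₂,…,ε_{2j+1})·B·C_{m−1−j}(ε_{2j+3},…,ε_{2m}))`. -/
theorem momentMatrix_recurrence
    (r : ℕ) (hr : 1 ≤ r)
    (b : Fin r → Fin r → ℝ) (hb : ∀ p q, 0 ≤ b p q)
    (C : (p q : Fin r) → (Unit ⊕ Unit) →
      (MSpace r Set.univ (Unit ⊕ Unit) →L[ℂ] MSpace r Set.univ (Unit ⊕ Unit)))
    (hC : ∀ p q l, IsMFCreation (b p q) p q l (Set.mem_univ _) (C p q l)) :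
    (∀ (k : ℕ), Odd k → ∀ (q : Fin r) (ε : Fin k → Bool),
      PsiM q (List.ofFn (fun j => sOp (ε j) (zetaSum C))).prod = 0) ∧
    (∀ (m : ℕ), 1 ≤ m → ∀ (ε : Fin (2 * m) → Bool),
      momentMat C (2 * m) ε
        = ∑ j ∈ (Finset.range m).attach,
            (have hj : (j : ℕ) < m := Finset.mem_range.mp j.2
             if ε ⟨0, by omega⟩ ≠ ε ⟨2 * (j : ℕ) + 1, by omega⟩ then
               Dmap ((momentMat C (2 * (j : ℕ))
                   (fun i => ε ⟨(i : ℕ) + 1, by have := i.isLt; omega⟩))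
                 * (Matrix.of fun p q => (b p q : ℂ))
                 * (momentMat C (2 * (m - 1 - (j : ℕ)))
                   (fun i => ε ⟨(i : ℕ) + 2 * (j : ℕ) + 2, by have := i.isLt; omega⟩)))
             else 0)) := by
  constructor
  · intro k hk q ε
    rw [MomAux.psi_ofFn hC]
    refine MomAux.Mnt_odd b (List.ofFn ε) q ?_
    rw [List.length_ofFn]
    exact Nat.odd_iff.mp hk
  · intro m hm ε
    have h2m : 1 ≤ 2 * m := by omega
    set rest : List Bool :=
      List.ofFn (fun i : Fin (2 * m - 1) => ε ⟨(i : ℕ) + 1, by have := i.isLt; omega⟩)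
      with hrest
    have hrl : rest.length = 2 * m - 1 := by rw [hrest, List.length_ofFn]
    have hsplit : List.ofFn ε = ε ⟨0, by omega⟩ :: rest := by
      rw [hrest]
      apply List.ext_getElem
      · rw [List.length_ofFn, List.length_cons, List.length_ofFn]; omega
      · intro i h1 h2
        cases i with
        | zero => simp [List.getElem_ofFn]
        | succ i =>
          rw [List.getElem_ofFn, List.getElem_cons_succ, List.getElem_ofFn]
    have htake : ∀ (j : ℕ) (hjm : j < m) (g : Fin (2 * j) → Bool),
        (∀ i : Fin (2 * j), g i = ε ⟨(i : ℕ) + 1, by have := i.isLt; omega⟩) →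
        List.ofFn g = rest.take (2 * j) := by
      intro j hj g hg
      rw [hrest]
      apply List.ext_getElem
      · rw [List.length_ofFn, List.length_take, List.length_ofFn]; omega
      · intro i h1 h2
        rw [List.length_ofFn] at h1
        rw [List.getElem_ofFn, List.getElem_take, List.getElem_ofFn]
        exact hg _
    have hdrop : ∀ (j : ℕ) (hjm : j < m) (g : Fin (2 * (m - 1 - j)) → Bool),
        (∀ i : Fin (2 * (m - 1 - j)), g i
          = ε ⟨(i : ℕ) + 2 * j + 2, by have := i.isLt; omega⟩) →
        List.ofFn g = rest.drop (2 * j + 1) := by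
      intro j hj g hg
      rw [hrest]
      apply List.ext_getElem
      · rw [List.length_ofFn, List.length_drop, List.length_ofFn]; omega
      · intro i h1 h2
        rw [List.length_ofFn] at h1
        rw [List.getElem_ofFn, List.getElem_drop, List.getElem_ofFn]
        exact (hg ⟨i, h1⟩).trans (congrArg ε (Fin.ext (by simp; omega)))
    have hgetD : ∀ (j : ℕ) (hjm : j < m),
        rest.getD (2 * j) false = ε ⟨2 * j + 1, by omega⟩ := by
      intro j hj
      rw [hrest]
      rw [List.getD_eq_getElem _ _ (by rw [List.length_ofFn]; omega), List.getElem_ofFn]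
    apply Matrix.ext
    intro q q'
    rw [Matrix.sum_apply]
    by_cases hqq : q = q'
    · subst hqq
      rw [MomAux.momentMat_diag hC, hsplit, MomAux.core b hb q _ rest, hrl]
      rw [MomAux.sum_even_range m hm _ (fun k hk => by
        rw [Finset.sum_eq_zero (fun p _ => by
          rw [MomAux.Mnt_odd b (rest.take k) p (by
            rw [List.length_take, hrl]
            omega), mul_zero, zero_mul]), ite_self])]
      rw [← Finset.sum_attach (Finset.range m)
        (fun j => if rest.getD (2 * j) false ≠ ε ⟨0, by omega⟩ then
          ∑ p, ((b p q : ℝ) : ℂ) * MomAux.Mnt b p (rest.take (2 * j))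
            * MomAux.Mnt b q (rest.drop (2 * j + 1)) else 0)]
      refine Finset.sum_congr rfl fun j _ => ?_
      have hj : (j : ℕ) < m := Finset.mem_range.mp j.2
      by_cases hcond : ε ⟨0, by omega⟩ ≠ ε ⟨2 * (j : ℕ) + 1, by omega⟩
      · rw [if_pos (by rw [hgetD (j : ℕ) hj]; exact Ne.symm hcond), if_pos hcond]
        rw [Dmap, Matrix.diagonal_apply_eq]
        refine Finset.sum_congr rfl fun p _ => ?_
        rw [momentMat, momentMat, Matrix.mul_diagonal, Matrix.diagonal_mul, Matrix.of_apply]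
        rw [MomAux.psi_ofFn hC, MomAux.psi_ofFn hC]
        rw [htake (j : ℕ) hj _ (fun i => rfl), hdrop (j : ℕ) hj _ (fun i => rfl)]
        ring
      · rw [if_neg (fun hne => hcond (Ne.symm (by rwa [hgetD (j : ℕ) hj] at hne))),
          if_neg hcond, Matrix.zero_apply]
    · rw [momentMat, Matrix.diagonal_apply_ne _ hqq]
      symm
      refine Finset.sum_eq_zero fun j _ => ?_
      by_cases hcond : ε ⟨0, by omega⟩ ≠ ε ⟨2 * (j : ℕ) + 1, by
          have := Finset.mem_range.mp j.2; omega⟩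
      · rw [if_pos hcond, Dmap, Matrix.diagonal_apply_ne _ hqq]
      · rw [if_neg hcond, Matrix.zero_apply]
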